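/- Let X, Y be metric spaces with X compact, let S ≥ 0, and let (f_l : E_l → Y)_{l≥1} be a sequence of S-Lipschitz maps with finite domains E_l ⊆ X. Then there exist a compact set E ⊆ X, an S-Lipschitz map f : E → Y, and a subsequence (l_i) such that the graphs Γ_{l_i} = {(x, f_{l_i}(x)) : x ∈ E_{l_i}} converge in the Hausdorff metric (on nonempty closed subsets of X × Y, Y compact) to the graph of f. In particular, any point y ∈ Y that is a limit of points y_i ∈ f_{l_i}(E_{l_i}) belongs to f(E). -/

import Mathlib

open Metric Filter Set

/-- Blaschke-selection / Arzelà–Ascoli with variable domains: given compact metric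
spaces `X`, `Y`, and `S`-Lipschitz maps `F l` defined on finite nonempty sets
`E l ⊆ X`, there exist a compact set `K ⊆ X`, an `S`-Lipschitz map `g : K → Y`,
and a subsequence `φ` along which the graphs of the `F l` converge in the
Hausdorff metric to the graph of `g`; in particular any limit of points of the
images `F (φ i) '' (E (φ i))` belongs to `g '' K`. -/
theorem graphs_converge_to_lipschitz_graph {X Y : Type*}
    [MetricSpace X] [CompactSpace X] [MetricSpace Y] [CompactSpace Y]
    (S : ℝ) (hS : 0 ≤ S) (E : ℕ → Set X) (F : ℕ → X → Y)
    (hfin : ∀ l, (E l).Finite) (hne : ∀ l, (E l).Nonempty)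
    (hlip : ∀ l, LipschitzOnWith S.toNNReal (F l) (E l)) :
    ∃ (K : Set X) (g : X → Y) (φ : ℕ → ℕ),
      IsCompact K ∧ K.Nonempty ∧ LipschitzOnWith S.toNNReal g K ∧ StrictMono φ ∧
      Tendsto (fun i =>
          hausdorffDist {p : X × Y | p.1 ∈ E (φ i) ∧ p.2 = F (φ i) p.1}
            {p : X × Y | p.1 ∈ K ∧ p.2 = g p.1})
        atTop (nhds 0) ∧
      ∀ (y : Y) (ys : ℕ → Y), (∀ i, ys i ∈ F (φ i) '' E (φ i)) →
        Tendsto ys atTop (nhds y) → y ∈ g '' K := by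
  classical
  haveI : Nonempty Y := ⟨F 0 (hne 0).some⟩
  set Γl : ℕ → Set (X × Y) := fun l => {p : X × Y | p.1 ∈ E l ∧ p.2 = F l p.1} with hΓl
  have hΓeq : ∀ l, Γl l = (fun x => (x, F l x)) '' E l := by
    intro l; ext p; constructor
    · rintro ⟨h1, h2⟩
      obtain ⟨a, b⟩ := p
      dsimp only at h1 h2
      subst h2
      exact ⟨a, h1, rfl⟩
    · rintro ⟨x, hx, rfl⟩; exact ⟨hx, rfl⟩
  have hΓcomp : ∀ l, IsCompact (Γl l) := fun l => by
    rw [hΓeq l]; exact ((hfin l).image _).isCompact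
  have hΓne : ∀ l, (Γl l).Nonempty := fun l => by
    obtain ⟨x, hx⟩ := hne l; exact ⟨(x, F l x), hx, rfl⟩
  let G : ℕ → TopologicalSpace.NonemptyCompacts (X × Y) :=
    fun l => ⟨⟨Γl l, hΓcomp l⟩, hΓne l⟩
  obtain ⟨L, -, φ, hφ, hconv⟩ :=
    isCompact_univ.tendsto_subseq (x := G) (fun n => mem_univ _)
  set Γ : Set (X × Y) := (L : Set (X × Y)) with hΓ
  have hΓcompL : IsCompact Γ := L.isCompact
  have hΓneL : Γ.Nonempty := L.nonempty
  -- distance of graphs to limit tends to 0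
  have hdist0 : Tendsto (fun i => hausdorffDist (Γl (φ i)) Γ) atTop (nhds 0) := by
    have := (tendsto_iff_dist_tendsto_zero).1 hconv
    simp [Function.comp, NonemptyCompacts.dist_eq] at this
    exact this
  have hfinTop : ∀ i, EMetric.hausdorffEdist Γ (Γl (φ i)) ≠ ⊤ := fun i =>
    hausdorffEdist_ne_top_of_nonempty_of_bounded hΓneL (hΓne _)
      hΓcompL.isBounded (hΓcomp _).isBounded
  -- approximation of points of Γ by points of the graphs
  have happrox : ∀ p ∈ Γ, ∃ q : ℕ → X × Y, (∀ i, q i ∈ Γl (φ i)) ∧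
      Tendsto q atTop (nhds p) := by
    intro p hp
    have h1 : ∀ i, ∃ q ∈ Γl (φ i), infDist p (Γl (φ i)) = dist p q := fun i =>
      (hΓcomp (φ i)).exists_infDist_eq_dist (hΓne _) p
    choose q hq hdq using h1
    refine ⟨q, hq, ?_⟩
    rw [tendsto_iff_dist_tendsto_zero]
    have hle : ∀ i, dist (q i) p ≤ hausdorffDist (Γl (φ i)) Γ := by
      intro i
      rw [dist_comm, ← hdq i, hausdorffDist_comm]
      exact infDist_le_hausdorffDist_of_mem hp (hfinTop i)
    exact squeeze_zero (fun i => dist_nonneg) hle hdist0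
  -- key Lipschitz-type property of Γ
  have hkey : ∀ p ∈ Γ, ∀ p' ∈ Γ, dist p.2 p'.2 ≤ S * dist p.1 p'.1 := by
    intro p hp p' hp'
    obtain ⟨q, hq, hqt⟩ := happrox p hp
    obtain ⟨q', hq', hqt'⟩ := happrox p' hp'
    have h1 : ∀ i, dist (q i).2 (q' i).2 ≤ S * dist (q i).1 (q' i).1 := by
      intro i
      have := (hlip (φ i)).dist_le_mul (q i).1 (hq i).1 (q' i).1 (hq' i).1
      rw [← (hq i).2, ← (hq' i).2] at this
      simpa [Real.coe_toNNReal _ hS] using this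
    have t1 : Tendsto (fun i => dist (q i).2 (q' i).2) atTop (nhds (dist p.2 p'.2)) :=
      ((continuous_snd.tendsto p).comp hqt).dist ((continuous_snd.tendsto p').comp hqt')
    have t2 : Tendsto (fun i => S * dist (q i).1 (q' i).1) atTop
        (nhds (S * dist p.1 p'.1)) :=
      (((continuous_fst.tendsto p).comp hqt).dist
        ((continuous_fst.tendsto p').comp hqt')).const_mul S
    exact le_of_tendsto_of_tendsto' t1 t2 h1
  -- define K and g
  set K : Set X := Prod.fst '' Γ with hK
  have hKcomp : IsCompact K := hΓcompL.image continuous_fst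
  have hKne : K.Nonempty := hΓneL.image _
  have hgext : ∀ x ∈ K, ∃ y, (x, y) ∈ Γ := by
    rintro x ⟨p, hp, rfl⟩; exact ⟨p.2, hp⟩
  set g : X → Y := fun x => if h : ∃ y, (x, y) ∈ Γ then h.choose else Classical.arbitrary Y
    with hg
  have hgΓ : ∀ x ∈ K, (x, g x) ∈ Γ := by
    intro x hx
    have h := hgext x hx
    simp only [hg, dif_pos h]
    exact h.choose_spec
  have huniq : ∀ x y, (x, y) ∈ Γ → x ∈ K ∧ y = g x := by
    intro x y hxy
    have hxK : x ∈ K := ⟨(x, y), hxy, rfl⟩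
    have := hkey (x, y) hxy (x, g x) (hgΓ x hxK)
    simp only [dist_self, mul_zero] at this
    exact ⟨hxK, dist_le_zero.1 this⟩
  have hgraph : {p : X × Y | p.1 ∈ K ∧ p.2 = g p.1} = Γ := by
    ext p; constructor
    · rintro ⟨h1, h2⟩
      have := hgΓ p.1 h1
      rwa [← h2] at this
    · intro hp
      exact huniq p.1 p.2 hp
  have hglip : LipschitzOnWith S.toNNReal g K := by
    intro x hx x' hx'
    rw [edist_dist, edist_dist, ← ENNReal.ofReal_coe_nnreal, ← ENNReal.ofReal_mul (by positivity)]
    apply ENNReal.ofReal_le_ofReal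
    have := hkey (x, g x) (hgΓ x hx) (x', g x') (hgΓ x' hx')
    simpa [Real.coe_toNNReal _ hS] using this
  refine ⟨K, g, φ, hKcomp, hKne, hglip, hφ, ?_, ?_⟩
  · rw [hgraph]; exact hdist0
  · intro y ys hys hyt
    choose xs hxs hfxs using hys
    obtain ⟨x, -, ψ, hψ, hxt⟩ := isCompact_univ.tendsto_subseq (x := xs) (fun n => mem_univ _)
    have hpt : Tendsto (fun j => (xs (ψ j), ys (ψ j))) atTop (nhds (x, y)) :=
      (Tendsto.prodMk_nhds hxt (hyt.comp hψ.tendsto_atTop))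
    have hmem : ∀ j, (xs (ψ j), ys (ψ j)) ∈ Γl (φ (ψ j)) := by
      intro j
      exact ⟨hxs (ψ j), (hfxs (ψ j)).symm⟩
    have h0 : infDist (x, y) Γ = 0 := by
      have hle : ∀ j, infDist (x, y) Γ ≤
          dist (x, y) (xs (ψ j), ys (ψ j)) + hausdorffDist (Γl (φ (ψ j))) Γ := by
        intro j
        calc infDist (x, y) Γ ≤ infDist (xs (ψ j), ys (ψ j)) Γ +
              dist (x, y) (xs (ψ j), ys (ψ j)) := infDist_le_infDist_add_dist
          _ ≤ _ := by
              rw [add_comm]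
              gcongr
              exact infDist_le_hausdorffDist_of_mem (hmem j)
                (by rw [EMetric.hausdorffEdist_comm]; exact hfinTop (ψ j))
      have htend : Tendsto (fun j => dist (x, y) (xs (ψ j), ys (ψ j)) +
          hausdorffDist (Γl (φ (ψ j))) Γ) atTop (nhds 0) := by
        have t1 : Tendsto (fun j => dist (x, y) (xs (ψ j), ys (ψ j))) atTop (nhds 0) := by
          have := Tendsto.dist
            (tendsto_const_nhds : Tendsto (fun _ : ℕ => ((x, y) : X × Y)) atTop (nhds (x, y)))
            hpt
          simpa using this
        have t2 := hdist0.comp hψ.tendsto_atTop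
        simpa using t1.add t2
      have := le_of_tendsto_of_tendsto'
        (tendsto_const_nhds : Tendsto (fun _ : ℕ => infDist ((x, y) : X × Y) Γ) atTop (nhds _))
        htend hle
      exact le_antisymm this infDist_nonneg
    have hxyΓ : (x, y) ∈ Γ := by
      rw [← (hΓcompL.isClosed.mem_iff_infDist_zero hΓneL)] at h0
      exact h0
    obtain ⟨hxK, hyg⟩ := huniq x y hxyΓ
    exact ⟨x, hxK, hyg.symm⟩
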